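/- arXiv:1102.2723 — 2 statements merged into one kernel-verified Lean document; each statement's English description precedes it below -/
import Mathlib

section
/- Let n ≥ 1 and let U_n(x) be the determinant of the (n+1)×(n+1) matrix whose rows with index i = 0,…,n−1 have entries s_{i+j} for j = 0,…,n and whose last row has entries 1, x, x², …, x^n. Then for every real x, U_n(x) = √(D_{n−1}·D_n) · P_n(x;p,q), where D_m = det((s_{i+j})_{0 ≤ i,j ≤ m}) and P_n(x;p,q) = (−1)^n·q^{n/2+1/4}·√((p;q)_n/(q;q)_n)·∑_{k=0}^n (−1)^k·[n choose k]_q·(q^{k²+k/2}/(p;q)_k)·x^k. -/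
/-- Finite q-shifted factorial `(z;q)_n`. -/
noncomputable def qp (z q : ℝ) (n : ℕ) : ℝ := ∏ k ∈ Finset.range n, (1 - z * q ^ k)

/-- Gaussian q-binomial coefficient. -/
noncomputable def qbinom (q : ℝ) (n k : ℕ) : ℝ := qp q q n / (qp q q k * qp q q (n - k))

/-- Generalized Stieltjes–Wigert moments `s_n = (p;q)_n q^{-(n+1)²/2}`. -/
noncomputable def sw (p q : ℝ) (n : ℕ) : ℝ := qp p q n * q ^ (-(((n : ℝ) + 1) ^ 2) / 2)

/-- Hankel determinant `D_m = det (s_{i+j})_{0 ≤ i,j ≤ m}`. -/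
noncomputable def hD (p q : ℝ) (m : ℕ) : ℝ :=
  (Matrix.of fun i j : Fin (m + 1) => sw p q ((i : ℕ) + (j : ℕ))).det

/-- Orthonormal generalized Stieltjes–Wigert polynomial `P_n(x;p,q)`. -/
noncomputable def P (p q : ℝ) (n : ℕ) (x : ℝ) : ℝ :=
  (-1) ^ n * q ^ ((n : ℝ) / 2 + 1 / 4) * Real.sqrt (qp p q n / qp q q n) *
    ∑ k ∈ Finset.range (n + 1),
      (-1) ^ k * qbinom q n k * (q ^ ((k : ℝ) ^ 2 + (k : ℝ) / 2) / qp p q k) * x ^ k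

/-! ### auxiliary lemmas -/

lemma qp_zero' (z q : ℝ) : qp z q 0 = 1 := by simp [qp]

lemma qp_succ' (z q : ℝ) (n : ℕ) : qp z q (n+1) = qp z q n * (1 - z * q ^ n) :=
  Finset.prod_range_succ _ n

lemma qp_pos {z q : ℝ} (hz0 : 0 ≤ z) (hz1 : z < 1) (hq0 : 0 ≤ q) (hq1 : q ≤ 1) (n : ℕ) :
    0 < qp z q n := by
  apply Finset.prod_pos
  intro k _
  have h1 : q ^ k ≤ 1 := pow_le_one₀ hq0 hq1
  have h2 : (0:ℝ) ≤ q ^ k := pow_nonneg hq0 k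
  nlinarith

lemma qp_add (z q : ℝ) (a b : ℕ) : qp z q (a+b) = qp z q a * qp (z * q ^ a) q b := by
  unfold qp
  rw [Finset.prod_range_add]
  congr 1
  refine Finset.prod_congr rfl fun k _ => ?_
  rw [pow_add]; ring

lemma even_ksq (k : ℕ) : 2 ∣ k * (k-1) := by
  rcases k with _ | m
  · simp
  · simp only [Nat.add_sub_cancel]
    rcases Nat.even_or_odd m with he | ho
    · exact (he.mul_left _).two_dvd
    · exact ((Odd.add_one ho).mul_right m).two_dvd

lemma csqR (k : ℕ) : ((k*(k-1)/2 : ℕ) : ℝ) = ((k:ℝ)^2 - (k:ℝ))/2 := by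
  have h := Nat.div_mul_cancel (even_ksq k)
  rcases k with _ | m
  · simp
  · have h2 : (((m+1)*((m+1)-1)/2 : ℕ) : ℝ) * 2 = (((m+1)*((m+1)-1) : ℕ) : ℝ) := by
      exact_mod_cast congrArg (Nat.cast : ℕ → ℝ) h
    have h3 : (((m+1)*((m+1)-1) : ℕ) : ℝ) = ((m+1:ℕ):ℝ)^2 - ((m+1:ℕ):ℝ) := by
      push_cast [Nat.add_sub_cancel]; ring
    rw [h3] at h2
    push_cast at h2 ⊢
    linarith

lemma qp_inv_zero {q : ℝ} (hq : q ≠ 0) {d n : ℕ} (hd : d < n) : qp ((q^d)⁻¹) q n = 0 :=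
  Finset.prod_eq_zero (Finset.mem_range.mpr hd) (by field_simp; norm_num)

section
variable {q : ℝ} (hq0 : 0 < q) (hq1 : q < 1)
include hq0 hq1

lemma F_pos (n : ℕ) : 0 < qp q q n := qp_pos hq0.le hq1 hq0.le hq1.le n

lemma F_ne (n : ℕ) : qp q q n ≠ 0 := (F_pos hq0 hq1 n).ne'

lemma qbinom_zero (n : ℕ) : qbinom q n 0 = 1 := by
  unfold qbinom
  rw [qp_zero', Nat.sub_zero, one_mul, div_self (F_ne hq0 hq1 n)]

lemma qbinom_self (n : ℕ) : qbinom q n n = 1 := by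
  unfold qbinom
  rw [Nat.sub_self, qp_zero', mul_one, div_self (F_ne hq0 hq1 n)]

lemma pascal {n k : ℕ} (hk : k < n) :
    qbinom q (n+1) (k+1) = qbinom q n (k+1) + q ^ (n-k) * qbinom q n k := by
  obtain ⟨d, rfl⟩ : ∃ d, n = k + d + 1 := ⟨n - k - 1, by omega⟩
  unfold qbinom
  have e1 : k + d + 1 + 1 - (k + 1) = d + 1 := by omega
  have e2 : k + d + 1 - (k + 1) = d := by omega
  have e3 : k + d + 1 - k = d + 1 := by omega
  rw [e1, e2, e3]
  have h1 : qp q q (k+1) = qp q q k * (1 - q * q ^ k) := qp_succ' q q k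
  have h2 : qp q q (d+1) = qp q q d * (1 - q * q ^ d) := qp_succ' q q d
  have h3 : qp q q (k+d+1+1) = qp q q (k+d+1) * (1 - q * q ^ (k+d+1)) := qp_succ' q q (k+d+1)
  rw [h1, h2, h3]
  have nk := F_ne hq0 hq1 k
  have nd := F_ne hq0 hq1 d
  have nkd := F_ne hq0 hq1 (k+d+1)
  have nqk : (1 - q * q ^ k) ≠ 0 := by
    have hp := F_pos hq0 hq1 (k+1); rw [h1] at hp
    intro h; rw [h, mul_zero] at hp; exact lt_irrefl 0 hp
  have nqd : (1 - q * q ^ d) ≠ 0 := by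
    have hp := F_pos hq0 hq1 (d+1); rw [h2] at hp
    intro h; rw [h, mul_zero] at hp; exact lt_irrefl 0 hp
  field_simp
  ring

omit hq0 hq1 in
lemma csq (k : ℕ) : (k+1)*((k+1)-1)/2 = k*(k-1)/2 + k := by
  rcases k with _ | m
  · simp
  · simp only [Nat.add_sub_cancel]
    have h2 : 2 ∣ (m+1) * m := by
      rcases Nat.even_or_odd m with he | ho
      · exact (he.mul_left _).two_dvd
      · exact ((Odd.add_one ho).mul_right m).two_dvd
    have h3 : (m+1+1) * (m+1) = (m+1) * m + 2*(m+1) := by ring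
    omega

lemma qbt (n : ℕ) (z : ℝ) :
    ∑ k ∈ Finset.range (n+1), (-1:ℝ) ^ k * qbinom q n k * q ^ (k*(k-1)/2) * z ^ k
      = qp z q n := by
  induction n generalizing z with
  | zero => simp [qp_zero', qbinom_self hq0 hq1 0]
  | succ n ih =>
    rw [qp_succ', ← ih z]
    set t : ℕ → ℕ → ℝ := fun m k => (-1:ℝ) ^ k * qbinom q m k * q ^ (k*(k-1)/2) * z ^ k with ht
    show ∑ k ∈ Finset.range (n+2), t (n+1) k
        = (∑ k ∈ Finset.range (n+1), t n k) * (1 - z * q ^ n)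
    have h0 : ∀ m, t m 0 = 1 := by
      intro m; simp [ht, qbinom_zero hq0 hq1]
    have key : ∀ k ∈ Finset.range n, t (n+1) (k+1) = t n (k+1) - z * q ^ n * t n k := by
      intro k hk
      have hk' : k < n := Finset.mem_range.mp hk
      have hnk : q ^ (n - k) * q ^ k = q ^ n := by
        rw [← pow_add]; congr 1; omega
      simp only [ht]
      rw [pascal hq0 hq1 hk', csq k, pow_add]
      linear_combination ((-1:ℝ)^(k+1) * qbinom q n k * q^(k*(k-1)/2) * z^(k+1)) * hnk
    have hTn : t (n+1) (n+1) = - (z * q ^ n * t n n) := by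
      simp only [ht]
      rw [qbinom_self hq0 hq1, qbinom_self hq0 hq1, csq n, pow_add]
      ring
    rw [Finset.sum_range_succ' _ (n+1), h0, Finset.sum_range_succ (fun k => t (n+1) (k+1)) n,
      Finset.sum_congr rfl key, hTn]
    have hB : ∑ k ∈ Finset.range (n+1), t n k
        = (∑ k ∈ Finset.range n, t n (k+1)) + 1 := by
      rw [Finset.sum_range_succ' (fun k => t n k) n, h0]
    have hC : ∑ k ∈ Finset.range (n+1), t n k
        = (∑ k ∈ Finset.range n, t n k) + t n n := Finset.sum_range_succ _ n
    rw [Finset.sum_sub_distrib, ← Finset.mul_sum, hB]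
    set B := ∑ k ∈ Finset.range n, t n (k+1)
    set C := ∑ k ∈ Finset.range n, t n k
    have hCB : C = B + 1 - t n n := by rw [← hB, hC]; ring
    rw [hCB]
    ring

/-- the coefficient of `x^k` in the sum defining `P`. -/
noncomputable def at' (p q : ℝ) (n k : ℕ) : ℝ :=
  (-1)^k * qbinom q n k * (q ^ ((k:ℝ)^2 + (k:ℝ)/2) / qp p q k)

lemma swap_sum (p : ℝ) (n i : ℕ) (w : ℝ) :
    ∑ k ∈ Finset.range (n+1),
        (-1:ℝ)^k * qbinom q n k * q ^ (k*(k-1)/2) * w^k * qp (p * q^k) q i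
      = ∑ m ∈ Finset.range (i+1),
        (-1:ℝ)^m * qbinom q i m * q ^ (m*(m-1)/2) * p^m * qp (w * q^m) q n := by
  have step1 : ∀ k ∈ Finset.range (n+1),
      (-1:ℝ)^k * qbinom q n k * q ^ (k*(k-1)/2) * w^k * qp (p * q^k) q i
        = ∑ m ∈ Finset.range (i+1),
            (-1:ℝ)^m * qbinom q i m * q ^ (m*(m-1)/2) * p^m *
              ((-1:ℝ)^k * qbinom q n k * q ^ (k*(k-1)/2) * (w * q^m)^k) := by
    intro k _
    rw [← qbt hq0 hq1 i (p * q^k), Finset.mul_sum]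
    refine Finset.sum_congr rfl fun m _ => ?_
    rw [mul_pow, mul_pow, ← pow_mul, ← pow_mul, mul_comm k m]
    ring
  rw [Finset.sum_congr rfl step1, Finset.sum_comm]
  refine Finset.sum_congr rfl fun m _ => ?_
  rw [← Finset.mul_sum, qbt hq0 hq1 n (w * q^m)]

omit hq1 in
lemma inv_pow_shift {i m : ℕ} (hm : m ≤ i) : (q^i)⁻¹ * q^m = (q^(i-m))⁻¹ := by
  have hq : q ≠ 0 := hq0.ne'
  have hh : q^i = q^(i-m) * q^m := by rw [← pow_add]; congr 1; omega
  rw [hh, mul_inv]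
  field_simp

lemma TzeroA (p : ℝ) {n i : ℕ} (hi : i < n) :
    ∑ k ∈ Finset.range (n+1),
        (-1:ℝ)^k * qbinom q n k * q ^ (k*(k-1)/2) * ((q^i)⁻¹)^k * qp (p * q^k) q i = 0 := by
  rw [swap_sum hq0 hq1 p n i ((q^i)⁻¹)]
  refine Finset.sum_eq_zero fun m hm => ?_
  have hm' : m ≤ i := Nat.lt_succ_iff.mp (Finset.mem_range.mp hm)
  rw [inv_pow_shift hq0 hm', qp_inv_zero hq0.ne' (by omega)]
  ring

lemma TvalB (p : ℝ) (n : ℕ) :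
    ∑ k ∈ Finset.range (n+1),
        (-1:ℝ)^k * qbinom q n k * q ^ (k*(k-1)/2) * ((q^n)⁻¹)^k * qp (p * q^k) q n
      = qp ((q^n)⁻¹) q n := by
  rw [swap_sum hq0 hq1 p n n ((q^n)⁻¹)]
  rw [Finset.sum_eq_single 0]
  · have h1 : qbinom q n 0 = 1 := qbinom_zero hq0 hq1 n
    simp [h1]
  · intro m hm hm0
    have hm' : m ≤ n := Nat.lt_succ_iff.mp (Finset.mem_range.mp hm)
    rw [inv_pow_shift hq0 hm', qp_inv_zero hq0.ne' (by omega)]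
    ring
  · intro h; simp at h

lemma bridge (p : ℝ) (hp0 : 0 ≤ p) (hp1 : p < 1) (n i k : ℕ) :
    at' p q n k * sw p q (i+k)
      = q ^ (-(((i:ℝ)+1)^2)/2) *
        ((-1:ℝ)^k * qbinom q n k * q ^ (k*(k-1)/2) * ((q^i)⁻¹)^k * qp (p * q^k) q i) := by
  have hGk : qp p q k ≠ 0 := (qp_pos hp0 hp1 hq0.le hq1.le k).ne'
  have hsplit : qp p q (i+k) = qp p q k * qp (p*q^k) q i := by
    rw [add_comm]; exact qp_add p q k i
  have hE : q ^ ((k:ℝ)^2 + (k:ℝ)/2) * q ^ (-(((↑(i+k):ℝ)+1)^2)/2)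
      = q ^ (-(((i:ℝ)+1)^2)/2) * (q ^ (k*(k-1)/2) * ((q^i)⁻¹)^k) := by
    have h1 : (q:ℝ) ^ (k*(k-1)/2) = q ^ (((k*(k-1)/2 : ℕ):ℝ)) := (Real.rpow_natCast q _).symm
    have h2 : ((q^i)⁻¹)^k = q ^ (-((i:ℝ)*(k:ℝ))) := by
      rw [← Real.rpow_natCast q i, ← Real.rpow_neg hq0.le,
        ← Real.rpow_natCast (q ^ (-(i:ℝ))) k, ← Real.rpow_mul hq0.le]
      ring_nf
    rw [h1, h2, csqR, ← Real.rpow_add hq0, ← Real.rpow_add hq0, ← Real.rpow_add hq0]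
    congr 1
    push_cast
    ring
  unfold at' sw
  rw [hsplit]
  calc (-1:ℝ)^k * qbinom q n k * (q ^ ((k:ℝ)^2 + (k:ℝ)/2) / qp p q k) *
        (qp p q k * qp (p*q^k) q i * q ^ (-(((↑(i+k):ℝ)+1)^2)/2))
      = ((-1:ℝ)^k * qbinom q n k * qp (p*q^k) q i) *
          (q ^ ((k:ℝ)^2 + (k:ℝ)/2) * q ^ (-(((↑(i+k):ℝ)+1)^2)/2)) *
          (qp p q k / qp p q k) := by ring
    _ = _ := by rw [div_self hGk, mul_one, hE]; ring

lemma sumA (p : ℝ) (hp0 : 0 ≤ p) (hp1 : p < 1) {n i : ℕ} (hi : i < n) :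
    ∑ k ∈ Finset.range (n+1), at' p q n k * sw p q (i+k) = 0 := by
  rw [Finset.sum_congr rfl fun k _ => bridge hq0 hq1 p hp0 hp1 n i k, ← Finset.mul_sum,
    TzeroA hq0 hq1 p hi, mul_zero]

lemma sumB (p : ℝ) (hp0 : 0 ≤ p) (hp1 : p < 1) (n : ℕ) :
    ∑ k ∈ Finset.range (n+1), at' p q n k * sw p q (n+k)
      = q ^ (-(((n:ℝ)+1)^2)/2) * qp ((q^n)⁻¹) q n := by
  rw [Finset.sum_congr rfl fun k _ => bridge hq0 hq1 p hp0 hp1 n n k, ← Finset.mul_sum,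
    TvalB hq0 hq1 p n]

omit hq1 in
lemma qp_invN (N : ℕ) :
    qp ((q^N)⁻¹) q N
      = (-1:ℝ)^N * q^(N*(N-1)/2) * (q^(N*N))⁻¹ * qp q q N := by
  have hq : q ≠ 0 := hq0.ne'
  have hfac : ∀ j ∈ Finset.range N,
      1 - (q^N)⁻¹ * q^j = (-((q^N)⁻¹ * q^j)) * (1 - q ^ (N-j)) := by
    intro j hj
    have hj' : j < N := Finset.mem_range.mp hj
    have hh : q^(N-j) * q^j = q^N := by rw [← pow_add]; congr 1; omega
    field_simp
    linear_combination -hh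
  have hrefl : ∏ j ∈ Finset.range N, (1 - q ^ (N-j)) = qp q q N := by
    have h1 : ∀ j ∈ Finset.range N, (1:ℝ) - q ^ (N-j) = (fun j => 1 - q^(j+1)) (N-1-j) := by
      intro j hj
      have hj' : j < N := Finset.mem_range.mp hj
      simp only
      congr 2
      omega
    rw [Finset.prod_congr rfl h1, Finset.prod_range_reflect (fun j => 1 - q^(j+1)) N]
    unfold qp
    refine Finset.prod_congr rfl fun j _ => ?_
    rw [← pow_succ']
  show (∏ j ∈ Finset.range N, (1 - (q^N)⁻¹ * q^j)) = _
  rw [Finset.prod_congr rfl hfac, Finset.prod_mul_distrib, hrefl]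
  congr 1
  have : ∀ j ∈ Finset.range N, -((q^N)⁻¹ * q^j) = (-1) * (q^N)⁻¹ * q^j := by
    intro j _; ring
  rw [Finset.prod_congr rfl this]
  rw [Finset.prod_mul_distrib, Finset.prod_mul_distrib, Finset.prod_const, Finset.prod_const,
    Finset.prod_pow_eq_pow_sum]
  have hsum : ∑ j ∈ Finset.range N, j = N*(N-1)/2 := by
    have := Finset.sum_range_id_mul_two N
    omega
  rw [hsum, inv_pow, ← pow_mul]
  simp [Finset.card_range]
  ring
end

lemma det_aux (m : ℕ) (s : ℕ → ℝ) (a : Fin (m+2) → ℝ) (ha : a (Fin.last (m+1)) = 1)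
    (horth : ∀ i : Fin (m+2), (i:ℕ) < m+1 → ∑ j : Fin (m+2), a j * s ((i:ℕ)+(j:ℕ)) = 0)
    (r : Fin (m+2) → ℝ) :
    (Matrix.of fun i j : Fin (m+2) => if (i:ℕ) < m+1 then s ((i:ℕ)+(j:ℕ)) else r j).det
      = (∑ j : Fin (m+2), a j * r j) *
        (Matrix.of fun i j : Fin (m+1) => s ((i:ℕ)+(j:ℕ))).det := by
  set M : Matrix (Fin (m+2)) (Fin (m+2)) ℝ :=
    Matrix.of fun i j : Fin (m+2) => if (i:ℕ) < m+1 then s ((i:ℕ)+(j:ℕ)) else r j with hM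
  set E : Matrix (Fin (m+2)) (Fin (m+2)) ℝ :=
    fun j l => if l = Fin.last (m+1) then a j else if j = l then 1 else 0 with hE
  have hlast : ∀ i : Fin (m+2), i ≠ Fin.last (m+1) ↔ (i:ℕ) < m+1 := by
    intro i
    constructor
    · intro h
      have := Fin.is_le i
      rcases lt_or_eq_of_le this with h1 | h2
      · exact h1
      · exact absurd (Fin.ext h2) h
    · intro h h2; rw [h2] at h; simp at h
  have hdetE : E.det = 1 := by
    have htri : E.BlockTriangular id := by
      intro j l hlt
      have hl : l ≠ Fin.last (m+1) := by
        intro h; rw [h] at hlt; exact absurd hlt (not_lt.mpr (Fin.le_last j))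
      have hjl : j ≠ l := (ne_of_lt hlt).symm
      simp [hE, hl, hjl]
    rw [Matrix.det_of_upperTriangular htri]
    refine Finset.prod_eq_one fun i _ => ?_
    by_cases h : i = Fin.last (m+1)
    · subst h; simp [hE, ha]
    · simp [hE, h]
  have hME : M * E = Matrix.of fun i l : Fin (m+2) =>
      if l = Fin.last (m+1) then (if (i:ℕ) < m+1 then 0 else ∑ j, a j * r j)
      else M i l := by
    ext i l
    rw [Matrix.mul_apply]
    by_cases hl : l = Fin.last (m+1)
    · subst hl
      simp only [hE, if_pos rfl, Matrix.of_apply, if_pos rfl]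
      by_cases hi : (i:ℕ) < m+1
      · rw [if_pos hi]
        rw [← horth i hi]
        refine Finset.sum_congr rfl fun j _ => ?_
        simp [hM, hi, mul_comm, not_lt.mpr (Nat.lt_succ_iff.mp hi)]
      · rw [if_neg hi]
        refine Finset.sum_congr rfl fun j _ => ?_
        simp [hM, hi, mul_comm, show ¬ (i:ℕ) ≤ m by omega]
    · simp only [hE, Matrix.of_apply, if_neg hl]
      rw [Finset.sum_eq_single l]
      · simp
      · intro j _ hj; simp [if_neg hl, hj]
      · simp
  have hdet : M.det = (M * E).det := by rw [Matrix.det_mul, hdetE, mul_one]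
  have hsubeq : (Matrix.of fun i l : Fin (m+2) =>
      if l = Fin.last (m+1) then (if (i:ℕ) < m+1 then 0 else ∑ j, a j * r j)
      else M i l).submatrix (Fin.last (m+1)).succAbove (Fin.last (m+1)).succAbove
      = Matrix.of fun i j : Fin (m+1) => s ((i:ℕ)+(j:ℕ)) := by
    ext i j
    have h1 : Fin.castSucc j ≠ Fin.last (m+1) := ne_of_lt (Fin.castSucc_lt_last j)
    have h2 : ((Fin.castSucc i : Fin (m+2)) : ℕ) < m+1 := by simp; exact Nat.lt_succ_iff.mp i.isLt
    simp [hM, Fin.succAbove_last, h1, h2, not_lt.mpr (Nat.lt_succ_iff.mp i.isLt)]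
  rw [hdet, hME, Matrix.det_succ_column _ (Fin.last (m+1)),
    Finset.sum_eq_single (Fin.last (m+1))]
  · rw [hsubeq]
    have hv : ¬ ((Fin.last (m+1) : ℕ) < m+1) := by simp
    simp only [Matrix.of_apply, if_pos rfl, if_neg hv]
    have hsign : (-1:ℝ) ^ ((Fin.last (m+1) : ℕ) + (Fin.last (m+1) : ℕ)) = 1 :=
      Even.neg_one_pow ⟨m+1, rfl⟩
    rw [hsign, one_mul, if_true]
  · intro i _ hi
    have h3 := (hlast i).mp hi
    simp [h3, not_lt.mpr (Nat.lt_succ_iff.mp h3)]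
  · simp

section final
variable {p q : ℝ} (hp0 : 0 ≤ p) (hp1 : p < 1) (hq0 : 0 < q) (hq1 : q < 1)
include hp0 hp1 hq0 hq1

lemma G_pos (n : ℕ) : 0 < qp p q n := qp_pos hp0 hp1 hq0.le hq1.le n

lemma at_top (n : ℕ) :
    at' p q n n = (-1:ℝ)^n * (q ^ ((n:ℝ)^2 + (n:ℝ)/2) / qp p q n) := by
  unfold at'
  rw [qbinom_self hq0 hq1]
  ring

lemma at_top_ne (n : ℕ) : at' p q n n ≠ 0 := by
  rw [at_top hp0 hp1 hq0 hq1]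
  have h1 : (0:ℝ) < q ^ ((n:ℝ)^2 + (n:ℝ)/2) := Real.rpow_pos_of_pos hq0 _
  have h2 := G_pos hp0 hp1 hq0 hq1 n
  rcases Nat.even_or_odd n with he | ho
  · rw [he.neg_one_pow]; positivity
  · rw [ho.neg_one_pow]
    intro h
    have : q ^ ((n:ℝ)^2 + (n:ℝ)/2) / qp p q n > 0 := by positivity
    nlinarith

lemma horth_gen (m : ℕ) :
    ∀ i : Fin (m+2), (i:ℕ) < m+1 →
      ∑ j : Fin (m+2), (at' p q (m+1) (j:ℕ) / at' p q (m+1) (m+1)) * sw p q ((i:ℕ)+(j:ℕ)) = 0 := by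
  intro i hi
  rw [Fin.sum_univ_eq_sum_range
    (fun jn => (at' p q (m+1) jn / at' p q (m+1) (m+1)) * sw p q ((i:ℕ)+jn)) (m+2)]
  have : ∀ jn ∈ Finset.range (m+2),
      (at' p q (m+1) jn / at' p q (m+1) (m+1)) * sw p q ((i:ℕ)+jn)
        = (at' p q (m+1) jn * sw p q ((i:ℕ)+jn)) / at' p q (m+1) (m+1) := by
    intro jn _; ring
  rw [Finset.sum_congr rfl this, ← Finset.sum_div,
    sumA hq0 hq1 p hp0 hp1 (n := m+1) (i := (i:ℕ)) hi, zero_div]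

lemma ha_gen (m : ℕ) :
    (fun j : Fin (m+2) => at' p q (m+1) (j:ℕ) / at' p q (m+1) (m+1)) (Fin.last (m+1)) = 1 := by
  simp only [Fin.val_last]
  exact div_self (at_top_ne hp0 hp1 hq0 hq1 (m+1))

lemma mu_div (N : ℕ) :
    q ^ (-(((N:ℝ)+1)^2)/2) * qp ((q^N)⁻¹) q N
      = at' p q N N * (qp p q N * qp q q N *
          q ^ (-(2*(N:ℝ)^2 + 2*(N:ℝ) + 1/2))) := by
  have hGne : qp p q N ≠ 0 := (G_pos hp0 hp1 hq0 hq1 N).ne'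
  rw [qp_invN hq0 N, at_top hp0 hp1 hq0 hq1 N]
  have hpow1 : ((q:ℝ)^(N*(N-1)/2)) = q ^ ((((N:ℝ))^2 - (N:ℝ))/2) := by
    rw [← csqR, Real.rpow_natCast]
  have hpow2 : ((q:ℝ)^(N*N))⁻¹ = q ^ (-((N:ℝ)^2)) := by
    rw [← Real.rpow_natCast q (N*N), ← Real.rpow_neg hq0.le]
    congr 1
    push_cast
    ring
  rw [hpow1, hpow2]
  have hq3 : q ^ (-(((N:ℝ)+1)^2)/2) * (q ^ ((((N:ℝ))^2 - (N:ℝ))/2) * q ^ (-((N:ℝ)^2)))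
      = q ^ ((N:ℝ)^2 + (N:ℝ)/2) * q ^ (-(2*(N:ℝ)^2 + 2*(N:ℝ) + 1/2)) := by
    rw [← Real.rpow_add hq0, ← Real.rpow_add hq0, ← Real.rpow_add hq0]
    congr 1
    ring
  calc q ^ (-(((N:ℝ)+1)^2)/2) *
        ((-1:ℝ)^N * q ^ ((((N:ℝ))^2 - (N:ℝ))/2) * q ^ (-((N:ℝ)^2)) * qp q q N)
      = (-1:ℝ)^N * qp q q N *
          (q ^ (-(((N:ℝ)+1)^2)/2) * (q ^ ((((N:ℝ))^2 - (N:ℝ))/2) * q ^ (-((N:ℝ)^2)))) := by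
        ring
    _ = (-1:ℝ)^N * qp q q N *
          (q ^ ((N:ℝ)^2 + (N:ℝ)/2) * q ^ (-(2*(N:ℝ)^2 + 2*(N:ℝ) + 1/2))) := by rw [hq3]
    _ = _ := by field_simp

lemma hDrec (m : ℕ) :
    hD p q (m+1) = (qp p q (m+1) * qp q q (m+1) *
        q ^ (-(2*((m+1:ℕ):ℝ)^2 + 2*((m+1:ℕ):ℝ) + 1/2))) * hD p q m := by
  have hA := at_top_ne hp0 hp1 hq0 hq1 (m+1)
  have happ := det_aux m (sw p q)
    (fun j : Fin (m+2) => at' p q (m+1) (j:ℕ) / at' p q (m+1) (m+1))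
    (ha_gen hp0 hp1 hq0 hq1 m) (horth_gen hp0 hp1 hq0 hq1 m)
    (fun j : Fin (m+2) => sw p q ((m+1) + (j:ℕ)))
  have hHankel : (Matrix.of fun i j : Fin (m+2) =>
      if (i:ℕ) < m+1 then sw p q ((i:ℕ)+(j:ℕ)) else sw p q ((m+1)+(j:ℕ)))
      = Matrix.of fun i j : Fin (m+2) => sw p q ((i:ℕ)+(j:ℕ)) := by
    ext i j
    by_cases hi : (i:ℕ) < m+1
    · simp [hi, not_lt.mpr (Nat.lt_succ_iff.mp hi)]
    · have hieq : (i:ℕ) = m+1 := by have := i.isLt; omega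
      simp [hi, hieq]
  have hmu : ∑ j : Fin (m+2),
        (at' p q (m+1) (j:ℕ) / at' p q (m+1) (m+1)) * sw p q ((m+1)+(j:ℕ))
      = qp p q (m+1) * qp q q (m+1) *
        q ^ (-(2*((m+1:ℕ):ℝ)^2 + 2*((m+1:ℕ):ℝ) + 1/2)) := by
    rw [Fin.sum_univ_eq_sum_range
      (fun jn => (at' p q (m+1) jn / at' p q (m+1) (m+1)) * sw p q ((m+1)+jn)) (m+2)]
    have hstep : ∀ jn ∈ Finset.range (m+2),
        (at' p q (m+1) jn / at' p q (m+1) (m+1)) * sw p q ((m+1)+jn)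
          = (at' p q (m+1) jn * sw p q ((m+1)+jn)) / at' p q (m+1) (m+1) := by
      intro jn _; ring
    rw [Finset.sum_congr rfl hstep, ← Finset.sum_div, sumB hq0 hq1 p hp0 hp1 (m+1),
      mu_div hp0 hp1 hq0 hq1 (m+1), mul_div_cancel_left₀ _ hA]
  rw [hmu] at happ
  show (Matrix.of fun i j : Fin (m+2) => sw p q ((i:ℕ)+(j:ℕ))).det = _
  rw [← hHankel, happ]
  rfl

lemma hD_pos : ∀ k, 0 < hD p q k := by
  intro k
  induction k with
  | zero =>
    unfold hD
    rw [Matrix.det_fin_one]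
    show 0 < sw p q _
    unfold sw
    have h1 : 0 < qp p q ((0:Fin 1).val + (0:Fin 1).val) := G_pos hp0 hp1 hq0 hq1 _
    have h2 : 0 < q ^ (-(((((0:Fin 1).val + (0:Fin 1).val : ℕ):ℝ)+1)^2)/2) :=
      Real.rpow_pos_of_pos hq0 _
    positivity
  | succ m ih =>
    rw [hDrec hp0 hp1 hq0 hq1 m]
    have h1 := G_pos hp0 hp1 hq0 hq1 (m+1)
    have h2 := F_pos hq0 hq1 (m+1)
    have h3 : 0 < q ^ (-(2*((m+1:ℕ):ℝ)^2 + 2*((m+1:ℕ):ℝ) + 1/2)) :=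
      Real.rpow_pos_of_pos hq0 _
    positivity

end final

theorem stmt_11 (p q : ℝ) (hp0 : 0 ≤ p) (hp1 : p < 1) (hq0 : 0 < q) (hq1 : q < 1)
    (n : ℕ) (hn : 1 ≤ n) (x : ℝ) :
    (Matrix.of fun i j : Fin (n + 1) =>
        if (i : ℕ) < n then sw p q ((i : ℕ) + (j : ℕ)) else x ^ (j : ℕ)).det
      = Real.sqrt (hD p q (n - 1) * hD p q n) * P p q n x := by
  obtain ⟨m, rfl⟩ : ∃ m, n = m + 1 := ⟨n - 1, by omega⟩
  have hA := at_top_ne hp0 hp1 hq0 hq1 (m+1)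
  have hm1 : m + 1 - 1 = m := by omega
  rw [hm1]
  -- LHS via det_aux
  have happ := det_aux m (sw p q)
    (fun j : Fin (m+2) => at' p q (m+1) (j:ℕ) / at' p q (m+1) (m+1))
    (ha_gen hp0 hp1 hq0 hq1 m) (horth_gen hp0 hp1 hq0 hq1 m)
    (fun j : Fin (m+2) => x ^ (j:ℕ))
  have hS : ∑ j : Fin (m+2), (at' p q (m+1) (j:ℕ) / at' p q (m+1) (m+1)) * x ^ (j:ℕ)
      = (∑ k ∈ Finset.range (m+2), at' p q (m+1) k * x ^ k) / at' p q (m+1) (m+1) := by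
    rw [Fin.sum_univ_eq_sum_range
      (fun jn => (at' p q (m+1) jn / at' p q (m+1) (m+1)) * x ^ jn) (m+2)]
    rw [Finset.sum_congr rfl
      (fun k _ => (by ring : (at' p q (m+1) k / at' p q (m+1) (m+1)) * x ^ k
        = at' p q (m+1) k * x ^ k / at' p q (m+1) (m+1))), ← Finset.sum_div]
  rw [hS] at happ
  have hLHS : (Matrix.of fun i j : Fin (m+1+1) =>
      if (i : ℕ) < m+1 then sw p q ((i : ℕ) + (j : ℕ)) else x ^ (j : ℕ)).det
      = (∑ k ∈ Finset.range (m+2), at' p q (m+1) k * x ^ k) / at' p q (m+1) (m+1) *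
          hD p q m := happ
  rw [hLHS]
  -- RHS
  set S := ∑ k ∈ Finset.range (m+2), at' p q (m+1) k * x ^ k with hSdef
  set G := qp p q (m+1) with hG
  set F := qp q q (m+1) with hF
  have hGpos : 0 < G := G_pos hp0 hp1 hq0 hq1 (m+1)
  have hFpos : 0 < F := F_pos hq0 hq1 (m+1)
  set R := G * F * q ^ (-(2*((m+1:ℕ):ℝ)^2 + 2*((m+1:ℕ):ℝ) + 1/2)) with hR
  have hRpos : 0 < R := by
    have h3 : 0 < q ^ (-(2*((m+1:ℕ):ℝ)^2 + 2*((m+1:ℕ):ℝ) + 1/2)) :=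
      Real.rpow_pos_of_pos hq0 _
    positivity
  have hDm := hD_pos hp0 hp1 hq0 hq1 m
  have hsqrt : Real.sqrt (hD p q m * hD p q (m+1)) = hD p q m * Real.sqrt R := by
    have h1 : hD p q m * hD p q (m+1) = (hD p q m)^2 * R := by
      rw [hDrec hp0 hp1 hq0 hq1 m, ← hR]; ring
    rw [h1, Real.sqrt_mul (sq_nonneg _), Real.sqrt_sq hDm.le]
  have hP : P p q (m+1) x
      = (-1:ℝ)^(m+1) * q ^ (((m+1:ℕ):ℝ)/2 + 1/4) * Real.sqrt (G/F) * S := by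
    unfold P
    rw [hSdef, Finset.sum_congr rfl (fun k _ => (by unfold at'; ring :
      (-1:ℝ) ^ k * qbinom q (m+1) k * (q ^ ((k:ℝ)^2 + (k:ℝ)/2) / qp p q k) * x ^ k
        = at' p q (m+1) k * x ^ k))]
  rw [hsqrt, hP]
  -- key constant identity
  set eh : ℝ := -((m+1:ℕ):ℝ)^2 - ((m+1:ℕ):ℝ) - 1/4 with heh
  have hsq2 : R * (G/F) = (G * q ^ eh)^2 := by
    have hqq : q ^ eh * q ^ eh = q ^ (-(2*((m+1:ℕ):ℝ)^2 + 2*((m+1:ℕ):ℝ) + 1/2)) := by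
      rw [← Real.rpow_add hq0]; congr 1; rw [heh]; ring
    calc R * (G/F) = G^2 * q ^ (-(2*((m+1:ℕ):ℝ)^2 + 2*((m+1:ℕ):ℝ) + 1/2)) * (F/F) := by
          rw [hR]; ring
      _ = G^2 * (q ^ eh * q ^ eh) := by rw [div_self hFpos.ne', mul_one, hqq]
      _ = (G * q ^ eh)^2 := by ring
  have hsplit : Real.sqrt R * Real.sqrt (G/F) = G * q ^ eh := by
    rw [← Real.sqrt_mul hRpos.le, hsq2,
      Real.sqrt_sq (by positivity : (0:ℝ) ≤ G * q ^ eh)]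
  have hmone : ((-1:ℝ)^(m+1)) * ((-1:ℝ)^(m+1)) = 1 := by
    rw [← pow_add]; exact Even.neg_one_pow ⟨m+1, rfl⟩
  have hkey : Real.sqrt R * ((-1:ℝ)^(m+1) * q ^ (((m+1:ℕ):ℝ)/2 + 1/4) * Real.sqrt (G/F)) *
      at' p q (m+1) (m+1) = 1 := by
    rw [at_top hp0 hp1 hq0 hq1 (m+1), ← hG]
    calc Real.sqrt R * ((-1:ℝ)^(m+1) * q ^ (((m+1:ℕ):ℝ)/2 + 1/4) * Real.sqrt (G/F)) *
          ((-1:ℝ)^(m+1) * (q ^ (((m+1:ℕ):ℝ)^2 + ((m+1:ℕ):ℝ)/2) / G))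
        = (Real.sqrt R * Real.sqrt (G/F)) * (((-1:ℝ)^(m+1)) * ((-1:ℝ)^(m+1))) *
            (q ^ (((m+1:ℕ):ℝ)/2 + 1/4) * q ^ (((m+1:ℕ):ℝ)^2 + ((m+1:ℕ):ℝ)/2)) / G := by
          ring
      _ = (G * q ^ eh) * 1 *
            (q ^ (((m+1:ℕ):ℝ)/2 + 1/4 + (((m+1:ℕ):ℝ)^2 + ((m+1:ℕ):ℝ)/2))) / G := by
          rw [hsplit, hmone, ← Real.rpow_add hq0]
      _ = (q ^ eh * q ^ (((m+1:ℕ):ℝ)/2 + 1/4 + (((m+1:ℕ):ℝ)^2 + ((m+1:ℕ):ℝ)/2))) * (G/G) := by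
          ring
      _ = q ^ (eh + (((m+1:ℕ):ℝ)/2 + 1/4 + (((m+1:ℕ):ℝ)^2 + ((m+1:ℕ):ℝ)/2))) := by
          rw [div_self hGpos.ne', mul_one, ← Real.rpow_add hq0]
      _ = 1 := by
          rw [show eh + (((m+1:ℕ):ℝ)/2 + 1/4 + (((m+1:ℕ):ℝ)^2 + ((m+1:ℕ):ℝ)/2)) = 0 by
            rw [heh]; ring]
          exact Real.rpow_zero q
  calc S / at' p q (m+1) (m+1) * hD p q m
      = (Real.sqrt R * ((-1:ℝ)^(m+1) * q ^ (((m+1:ℕ):ℝ)/2 + 1/4) * Real.sqrt (G/F)) *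
          at' p q (m+1) (m+1)) * (S / at' p q (m+1) (m+1) * hD p q m) := by
        rw [hkey, one_mul]
    _ = hD p q m * Real.sqrt R *
          ((-1:ℝ)^(m+1) * q ^ (((m+1:ℕ):ℝ)/2 + 1/4) * Real.sqrt (G/F) * S) *
          (at' p q (m+1) (m+1) / at' p q (m+1) (m+1)) := by ring
    _ = _ := by rw [div_self hA, mul_one]
end

section
/- The series ∑_{n=0}^∞ ((q;q)_n/(pq²;q)_n)·q^n converges and equals (1−pq)·((pq;q)_∞ − (q;q)_∞)/(q·(p;q)_∞); equivalently, with m_k = q·(1−q^k)/(1+q−(1+p)·q^{k+1}) and M_0 = q·(p;q)_∞/((1−pq)·((pq;q)_∞ − (q;q)_∞)), one has 1 + ∑_{n=1}^∞ ∏_{k=1}^n (m_k/(1−m_k)) = 1/M_0. -/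
/-- Infinite q-shifted factorial `(z;q)_∞`. -/
noncomputable def qpInf (z q : ℝ) : ℝ := ∏' k : ℕ, (1 - z * q ^ k)

/-- The minimal parameter sequence `m_k`. -/
noncomputable def mseq (p q : ℝ) (k : ℕ) : ℝ :=
  q * (1 - q ^ k) / (1 + q - (1 + p) * q ^ (k + 1))


open Finset Filter Real Topology

section aux
variable {z q : ℝ} (hz0 : 0 ≤ z) (hz1 : z < 1) (hq0 : 0 < q) (hq1 : q < 1)
include hz0 hz1 hq0 hq1

lemma myq_fac_pos (k : ℕ) : 0 < 1 - z * q ^ k := by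
  have h1 : q ^ k ≤ 1 := pow_le_one₀ hq0.le hq1.le
  nlinarith [pow_pos hq0 k]

lemma myq_qp_pos (n : ℕ) : 0 < qp z q n :=
  Finset.prod_pos fun k _ => myq_fac_pos hz0 hz1 hq0 hq1 k

lemma myq_summable_log : Summable fun k : ℕ => Real.log (1 - z * q ^ k) := by
  rw [← summable_neg_iff]
  have hb : Summable fun k : ℕ => (z / (1 - z)) * q ^ k :=
    (summable_geometric_of_lt_one hq0.le hq1).mul_left _
  refine hb.of_nonneg_of_le (fun k => ?_) (fun k => ?_)
  · simp only [neg_nonneg]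
    exact Real.log_nonpos (myq_fac_pos hz0 hz1 hq0 hq1 k).le
      (by nlinarith [pow_pos hq0 k, pow_le_one₀ hq0.le hq1.le (n := k)])
  · have hk := myq_fac_pos hz0 hz1 hq0 hq1 k
    have h2 : 1 - z ≤ 1 - z * q ^ k := by
      nlinarith [pow_pos hq0 k, pow_le_one₀ hq0.le hq1.le (n := k)]
    have hlog := Real.log_le_sub_one_of_pos (x := (1 - z * q ^ k)⁻¹) (by positivity)
    rw [Real.log_inv] at hlog
    have h3 : (1 - z * q ^ k)⁻¹ - 1 = (z * q ^ k) / (1 - z * q ^ k) := by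
      field_simp
      ring
    rw [h3] at hlog
    refine hlog.trans ?_
    have h4 : (z * q ^ k) / (1 - z * q ^ k) ≤ (z * q ^ k) / (1 - z) :=
      div_le_div_of_nonneg_left (by positivity) (by linarith) h2
    refine h4.trans_eq ?_
    rw [div_mul_eq_mul_div, mul_comm z (q ^ k), mul_div_assoc, mul_comm]

lemma myq_multipliable : Multipliable fun k : ℕ => 1 - z * q ^ k := by
  have := Real.multipliable_of_summable_log (f := fun k : ℕ => 1 - z * q ^ k)
    (fun k => myq_fac_pos hz0 hz1 hq0 hq1 k) (myq_summable_log hz0 hz1 hq0 hq1)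
  exact this

lemma myq_qpInf_pos : 0 < qpInf z q := by
  have h2 : rexp (∑' k : ℕ, Real.log (1 - z * q ^ k)) = ∏' k : ℕ, (1 - z * q ^ k) :=
    Real.rexp_tsum_eq_tprod (fun k => myq_fac_pos hz0 hz1 hq0 hq1 k)
      (myq_summable_log hz0 hz1 hq0 hq1)
  rw [qpInf, ← h2]
  exact Real.exp_pos _

lemma myq_tendsto_qp : Tendsto (fun n => qp z q n) atTop (𝓝 (qpInf z q)) :=
  (myq_multipliable hz0 hz1 hq0 hq1).hasProd.tendsto_prod_nat

lemma myq_qpInf_shift : qpInf z q = (1 - z) * qpInf (z * q) q := by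
  have hz0' : 0 ≤ z * q := by positivity
  have hz1' : z * q < 1 := by nlinarith
  have h1 : Tendsto (fun n => qp z q (n + 1)) atTop (𝓝 (qpInf z q)) :=
    (myq_tendsto_qp hz0 hz1 hq0 hq1).comp (tendsto_add_atTop_nat 1)
  have h2 : ∀ n, qp z q (n + 1) = (1 - z) * qp (z * q) q n := by
    intro n
    rw [qp, qp, Finset.prod_range_succ']
    simp only [pow_zero, mul_one]
    rw [mul_comm]
    congr 1
    exact Finset.prod_congr rfl fun k _ => by ring
  have h3 : Tendsto (fun n => (1 - z) * qp (z * q) q n) atTop (𝓝 ((1 - z) * qpInf (z * q) q)) :=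
    (myq_tendsto_qp hz0' hz1' hq0 hq1).const_mul _
  exact tendsto_nhds_unique (by simpa only [h2] using h1) h3

end aux

theorem stmt_16 (p q : ℝ) (hp0 : 0 ≤ p) (hp1 : p < 1) (hq0 : 0 < q) (hq1 : q < 1) :
    Summable (fun n : ℕ => qp q q n / qp (p * q ^ 2) q n * q ^ n) ∧
    (∑' n : ℕ, qp q q n / qp (p * q ^ 2) q n * q ^ n)
      = (1 - p * q) * (qpInf (p * q) q - qpInf q q) / (q * qpInf p q) ∧
    Summable (fun n : ℕ =>
      ∏ k ∈ Finset.Icc 1 (n + 1), (mseq p q k / (1 - mseq p q k))) ∧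
    1 + (∑' n : ℕ, ∏ k ∈ Finset.Icc 1 (n + 1), (mseq p q k / (1 - mseq p q k)))
      = 1 / (q * qpInf p q / ((1 - p * q) * (qpInf (p * q) q - qpInf q q))) := by
  have hpq0 : 0 ≤ p * q := by positivity
  have hpq1 : p * q < 1 := by nlinarith
  have hpq20 : 0 ≤ p * q ^ 2 := by positivity
  have hpq21 : p * q ^ 2 < 1 := by nlinarith
  have hp1' : (0:ℝ) < 1 - p := by linarith
  have hpq1' : (0:ℝ) < 1 - p * q := by linarith
  set a : ℕ → ℝ := fun n => qp q q n / qp (p * q ^ 2) q n * q ^ n with ha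
  set f : ℕ → ℝ := fun n =>
    qp q q n / qp (p * q ^ 2) q n * ((1 - p * q * q ^ n) / (q * (1 - p))) with hf
  have hqp2_pos : ∀ n, 0 < qp (p * q ^ 2) q n := myq_qp_pos hpq20 hpq21 hq0 hq1
  have hqp1_pos : ∀ n, 0 < qp q q n := myq_qp_pos hq0.le hq1 hq0 hq1
  have hnum_pos : ∀ n : ℕ, 0 < 1 - p * q * q ^ n := by
    intro n
    nlinarith [pow_pos hq0 n, pow_le_one₀ hq0.le hq1.le (n := n)]
  -- telescoping
  have key : ∀ n, f n - f (n + 1) = a n := by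
    intro n
    have e1 : qp q q (n + 1) = qp q q n * (1 - q * q ^ n) := by
      rw [qp, qp, Finset.prod_range_succ]
    have e2 : qp (p * q ^ 2) q (n + 1) = qp (p * q ^ 2) q n * (1 - p * q ^ 2 * q ^ n) := by
      rw [qp, qp, Finset.prod_range_succ]
    have h2 := hqp2_pos n
    have h3 : (0:ℝ) < 1 - p * q ^ 2 * q ^ n := by
      nlinarith [pow_pos hq0 n, pow_le_one₀ hq0.le hq1.le (n := n)]
    simp only [hf, ha, e1, e2]
    field_simp
    ring
  have hpartial : ∀ n, ∑ i ∈ Finset.range n, a i = f 0 - f n := by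
    intro n
    rw [← Finset.sum_range_sub' f n]
    exact Finset.sum_congr rfl fun i _ => (key i).symm
  have hf_nonneg : ∀ n, 0 ≤ f n := by
    intro n
    have := hnum_pos n
    have := hqp2_pos n
    have := hqp1_pos n
    positivity
  have ha_nonneg : ∀ n, 0 ≤ a n := by
    intro n
    have := hqp2_pos n
    have := hqp1_pos n
    positivity
  -- summability
  have hS : Summable a := by
    apply summable_of_sum_range_le ha_nonneg (c := f 0)
    intro n
    rw [hpartial n]
    linarith [hf_nonneg n]
  -- limits
  have hL2 : 0 < qpInf (p * q ^ 2) q := myq_qpInf_pos hpq20 hpq21 hq0 hq1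
  have hpow : Tendsto (fun n : ℕ => q ^ n) atTop (𝓝 0) :=
    tendsto_pow_atTop_nhds_zero_of_lt_one hq0.le hq1
  have hfT : Tendsto f atTop
      (𝓝 (qpInf q q / qpInf (p * q ^ 2) q * ((1 - p * q * 0) / (q * (1 - p))))) := by
    refine Tendsto.mul ?_ ?_
    · exact (myq_tendsto_qp hq0.le hq1 hq0 hq1).div
        (myq_tendsto_qp hpq20 hpq21 hq0 hq1) hL2.ne'
    · exact (tendsto_const_nhds.sub (hpow.const_mul _)).div_const _
  have hsumT : Tendsto (fun n => ∑ i ∈ Finset.range n, a i) atTop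
      (𝓝 (f 0 - qpInf q q / qpInf (p * q ^ 2) q * ((1 - p * q * 0) / (q * (1 - p))))) := by
    simp only [hpartial]
    exact tendsto_const_nhds.sub hfT
  have htsum : ∑' n, a n
      = f 0 - qpInf q q / qpInf (p * q ^ 2) q * ((1 - p * q * 0) / (q * (1 - p))) :=
    tendsto_nhds_unique hS.hasSum.tendsto_sum_nat hsumT
  -- product relations
  have hshift1 : qpInf p q = (1 - p) * qpInf (p * q) q :=
    myq_qpInf_shift hp0 hp1 hq0 hq1
  have hshift2 : qpInf (p * q) q = (1 - p * q) * qpInf (p * q ^ 2) q := by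
    have := myq_qpInf_shift hpq0 hpq1 hq0 hq1
    rwa [show p * q * q = p * q ^ 2 by ring] at this
  have hf0 : f 0 = (1 - p * q) / (q * (1 - p)) := by
    simp [hf, qp]
  have part2 : (∑' n, a n)
      = (1 - p * q) * (qpInf (p * q) q - qpInf q q) / (q * qpInf p q) := by
    rw [htsum, hshift1, hshift2, hf0]
    field_simp
    ring
  -- second family
  have hm : ∀ k : ℕ, mseq p q k / (1 - mseq p q k)
      = q * (1 - q ^ k) / (1 - p * q ^ (k + 1)) := by
    intro k
    have hqk1 : q ^ (k + 1) ≤ q := by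
      calc q ^ (k + 1) ≤ q ^ 1 := pow_le_pow_of_le_one hq0.le hq1.le (by omega)
      _ = q := pow_one q
    have hD : 0 < 1 + q - (1 + p) * q ^ (k + 1) := by nlinarith [pow_pos hq0 (k+1)]
    have hE : 0 < 1 - p * q ^ (k + 1) := by nlinarith [pow_pos hq0 (k+1)]
    have h1m : 1 - mseq p q k
        = (1 - p * q ^ (k + 1)) / (1 + q - (1 + p) * q ^ (k + 1)) := by
      rw [mseq]
      field_simp
      ring
    rw [h1m, mseq, div_div_div_comm, div_self hD.ne', div_one]
  have hprod : ∀ n : ℕ, (∏ k ∈ Finset.Icc 1 (n + 1), (mseq p q k / (1 - mseq p q k)))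
      = a (n + 1) := by
    intro n
    have h1 : (∏ k ∈ Finset.Icc 1 (n + 1), (mseq p q k / (1 - mseq p q k)))
        = ∏ k ∈ Finset.Icc 1 (n + 1), (q * (1 - q ^ k) / (1 - p * q ^ (k + 1))) :=
      Finset.prod_congr rfl fun k _ => hm k
    rw [h1, ← Finset.Ico_add_one_right_eq_Icc, Finset.prod_Ico_eq_prod_range]
    norm_num
    simp only [ha, qp]
    rw [Finset.prod_mul_distrib, Finset.prod_const, Finset.card_range]
    rw [show (∏ i ∈ Finset.range (n + 1), (1 - q ^ (1 + i)))
        = ∏ i ∈ Finset.range (n + 1), (1 - q * q ^ i) from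
      Finset.prod_congr rfl fun i _ => by ring]
    rw [show (∏ i ∈ Finset.range (n + 1), (1 - p * q ^ (1 + i + 1)))
        = ∏ i ∈ Finset.range (n + 1), (1 - p * q ^ 2 * q ^ i) from
      Finset.prod_congr rfl fun i _ => by ring]
    ring
  have hSb : Summable (fun n : ℕ =>
      ∏ k ∈ Finset.Icc 1 (n + 1), (mseq p q k / (1 - mseq p q k))) :=
    (((summable_nat_add_iff 1).mpr hS).congr (fun n => (hprod n).symm))
  refine ⟨hS, part2, hSb, ?_⟩
  rw [one_div_div]
  rw [tsum_congr hprod]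
  have ha0 : a 0 = 1 := by simp [ha, qp]
  rw [show (1:ℝ) + ∑' n, a (n + 1) = a 0 + ∑' n, a (n + 1) by rw [ha0],
    ← Summable.tsum_eq_zero_add hS]
  exact part2
end
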